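/- arXiv:1112.3452 — 6 statements merged into one kernel-verified Lean document; each statement's English description precedes it below -/
import Mathlib

section
/- Let $a_1,\ldots,a_m$ (with $m>1$) and $b$ be real numbers satisfying $(\sum_{i=1}^m a_i)^2 \geq (m-1)\sum_{i=1}^m a_i^2 + b$. Then for all indices $i \neq j$ we have $2 a_i a_j \geq \frac{b}{m-1}$. -/
/-- Chen's lemma: if `(∑ aᵢ)² ≥ (m-1) ∑ aᵢ² + b` with `m > 1`, then
`2 aᵢ aⱼ ≥ b / (m-1)` for all `i ≠ j`. -/
theorem chen_lemma (m : ℕ) (hm : 1 < m) (a : Fin m → ℝ) (b : ℝ)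
    (h : (∑ i, a i) ^ 2 ≥ (m - 1 : ℝ) * ∑ i, (a i) ^ 2 + b) :
    ∀ i j : Fin m, i ≠ j → 2 * a i * a j ≥ b / (m - 1 : ℝ) := by
  intro i j hij
  have hm1 : (0:ℝ) < (m - 1 : ℝ) := by
    have : (1:ℝ) < m := by exact_mod_cast hm
    linarith
  set s : Finset (Fin m) := Finset.univ.erase j with hs
  have hi : i ∈ s := Finset.mem_erase.2 ⟨hij, Finset.mem_univ i⟩
  set f : Fin m → ℝ := Function.update a i (a i + a j) with hf
  have hcard : (s.card : ℝ) = (m - 1 : ℝ) := by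
    rw [hs, Finset.card_erase_of_mem (Finset.mem_univ j)]
    simp
    rw [Nat.cast_sub hm.le]
    simp
  have hsum : ∑ k ∈ s, f k = ∑ k, a k := by
    rw [hf, Finset.sum_update_of_mem hi, ← Finset.erase_eq]
    rw [Finset.sum_erase_eq_sub hi, hs, Finset.sum_erase_eq_sub (Finset.mem_univ j)]
    ring
  have hsq : ∑ k ∈ s, f k ^ 2 = (∑ k, a k ^ 2) + 2 * a i * a j := by
    have : (fun k => f k ^ 2) = Function.update (fun k => a k ^ 2) i ((a i + a j) ^ 2) := by
      funext k
      by_cases hk : k = i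
      · subst hk; simp [hf]
      · simp [hf, Function.update_of_ne hk]
    rw [show ∑ k ∈ s, f k ^ 2 = ∑ k ∈ s, (fun k => f k ^ 2) k from rfl, this,
      Finset.sum_update_of_mem hi, ← Finset.erase_eq]
    rw [Finset.sum_erase_eq_sub (f := fun k => a k ^ 2) hi, hs,
      Finset.sum_erase_eq_sub (f := fun k => a k ^ 2) (Finset.mem_univ j)]
    ring
  have hcs := sq_sum_le_card_mul_sum_sq (s := s) (f := f)
  rw [hsum, hsq, hcard] at hcs
  rw [ge_iff_le, div_le_iff₀ hm1]
  nlinarith [hcs, h]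
end

section
/- Let $a_1,\ldots,a_m$ (with $m>1$) and $b$ be real numbers satisfying the strict inequality $(\sum_{i=1}^m a_i)^2 > (m-1)\sum_{i=1}^m a_i^2 + b$. Then for all indices $i \neq j$ the strict inequality $2 a_i a_j > \frac{b}{m-1}$ holds. -/
/-- Strict version of Chen's lemma. -/
theorem chen_lemma_strict (m : ℕ) (hm : 1 < m) (a : Fin m → ℝ) (b : ℝ)
    (h : (∑ i, a i) ^ 2 > (m - 1 : ℝ) * ∑ i, (a i) ^ 2 + b) :
    ∀ i j : Fin m, i ≠ j → 2 * a i * a j > b / (m - 1 : ℝ) := by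
  intro i j hij
  have hm1 : (0:ℝ) < (m : ℝ) - 1 := by
    have : (1:ℝ) < m := by exact_mod_cast hm
    linarith
  set s : Finset (Fin m) := Finset.univ.erase j with hs
  have hi : i ∈ s := Finset.mem_erase.mpr ⟨hij, Finset.mem_univ i⟩
  set f : Fin m → ℝ := fun k => if k = i then a i + a j else a k with hf
  have hcard : (s.card : ℝ) = (m:ℝ) - 1 := by
    rw [hs, Finset.card_erase_of_mem (Finset.mem_univ j)]
    rw [Finset.card_univ, Fintype.card_fin, Nat.cast_sub hm.le]
    simp
  have hcongr : ∑ k ∈ s.erase i, f k = ∑ k ∈ s.erase i, a k := by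
    refine Finset.sum_congr rfl fun k hk => ?_
    have : k ≠ i := Finset.ne_of_mem_erase hk
    simp [hf, this]
  have hcongr2 : ∑ k ∈ s.erase i, f k ^ 2 = ∑ k ∈ s.erase i, a k ^ 2 := by
    refine Finset.sum_congr rfl fun k hk => ?_
    have : k ≠ i := Finset.ne_of_mem_erase hk
    simp [hf, this]
  have hsum : ∑ k ∈ s, f k = ∑ k, a k := by
    rw [← Finset.add_sum_erase s f hi, hcongr,
        ← Finset.add_sum_erase Finset.univ a (Finset.mem_univ j),
        ← Finset.add_sum_erase s a hi]
    simp [hf]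
    ring
  have hsq : ∑ k ∈ s, f k ^ 2 = ∑ k, a k ^ 2 + 2 * a i * a j := by
    rw [← Finset.add_sum_erase s (fun k => f k ^ 2) hi, hcongr2,
        ← Finset.add_sum_erase Finset.univ (fun k => a k ^ 2) (Finset.mem_univ j),
        ← Finset.add_sum_erase s (fun k => a k ^ 2) hi]
    simp [hf]
    ring
  have hcs : (∑ k ∈ s, f k) ^ 2 ≤ (s.card : ℝ) * ∑ k ∈ s, f k ^ 2 := by
    exact sq_sum_le_card_mul_sum_sq
  rw [hsum, hsq, hcard] at hcs
  rw [gt_iff_lt, div_lt_iff₀ hm1]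
  nlinarith [hcs, h]
end

section
/- Let $A_1,\ldots,A_p$ ($p \geq 2$) be real symmetric $m \times m$ matrices, and let $N(A) = \operatorname{trace}(A^t A)$. Then $\sum_{\alpha,\beta=1}^p \{N(A_\alpha A_\beta - A_\beta A_\alpha) + (\operatorname{trace}(A_\alpha A_\beta))^2\} \leq \frac{3}{2}\big(\sum_{\alpha=1}^p N(A_\alpha)\big)^2$. -/
open Matrix Finset

namespace LiLi
variable {m : ℕ}

local notation "M" => Matrix (Fin m) (Fin m) ℝ

/-- trace inner product -/
def ip (X Y : M) : ℝ := (Xᵀ * Y).trace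

lemma ip_eq_sum (X Y : M) : ip X Y = ∑ i, ∑ j, X j i * Y j i := by
  simp [ip, Matrix.trace, Matrix.diag, Matrix.mul_apply, Matrix.transpose_apply]

lemma ip_symm (X Y : M) : ip X Y = ip Y X := by
  simp_rw [ip_eq_sum]
  exact Finset.sum_congr rfl fun i _ => Finset.sum_congr rfl fun j _ => mul_comm _ _

lemma ip_self_eq (X : M) : ip X X = ∑ i, ∑ j, (X j i)^2 := by
  simp_rw [ip_eq_sum, sq]

lemma ip_self_nonneg (X : M) : 0 ≤ ip X X := by
  rw [ip_self_eq]
  exact Finset.sum_nonneg fun i _ => Finset.sum_nonneg fun j _ => sq_nonneg _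

lemma ip_self_eq_zero {X : M} (h : ip X X = 0) (i j : Fin m) : X i j = 0 := by
  rw [ip_self_eq] at h
  have h1 := (Finset.sum_eq_zero_iff_of_nonneg (fun i _ => Finset.sum_nonneg
    fun j _ => sq_nonneg _)).1 h j (mem_univ j)
  have h2 := (Finset.sum_eq_zero_iff_of_nonneg (fun k _ => sq_nonneg _)).1 h1 i (mem_univ i)
  exact pow_eq_zero_iff (two_ne_zero) |>.1 h2

lemma ip_add_left (X Y Z : M) : ip (X + Y) Z = ip X Z + ip Y Z := by
  simp [ip, Matrix.transpose_add, Matrix.add_mul]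

lemma ip_sub_left (X Y Z : M) : ip (X - Y) Z = ip X Z - ip Y Z := by
  simp [ip, Matrix.transpose_sub, Matrix.sub_mul]

lemma ip_smul_left (c : ℝ) (X Z : M) : ip (c • X) Z = c * ip X Z := by
  simp [ip, Matrix.transpose_smul, Matrix.smul_mul]

lemma ip_add_right (X Y Z : M) : ip Z (X + Y) = ip Z X + ip Z Y := by
  rw [ip_symm, ip_add_left, ip_symm X Z, ip_symm Y Z]

lemma ip_sub_right (X Y Z : M) : ip Z (X - Y) = ip Z X - ip Z Y := by
  rw [ip_symm, ip_sub_left, ip_symm X Z, ip_symm Y Z]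

lemma ip_smul_right (c : ℝ) (X Z : M) : ip Z (c • X) = c * ip Z X := by
  rw [ip_symm, ip_smul_left, ip_symm X Z]

lemma ip_sum_right {ι : Type*} (s : Finset ι) (f : ι → M) (Z : M) :
    ip Z (∑ i ∈ s, f i) = ∑ i ∈ s, ip Z (f i) := by
  classical
  induction s using Finset.induction with
  | empty => simp [ip]
  | insert _ _ h ih => rw [Finset.sum_insert h, ip_add_right, ih, Finset.sum_insert h]

lemma ip_sum_left {ι : Type*} (s : Finset ι) (f : ι → M) (Z : M) :
    ip (∑ i ∈ s, f i) Z = ∑ i ∈ s, ip (f i) Z := by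
  rw [ip_symm, ip_sum_right]
  exact Finset.sum_congr rfl fun i _ => ip_symm _ _

end LiLi

namespace LiLi
variable {m : ℕ}
local notation "M" => Matrix (Fin m) (Fin m) ℝ

/-- Bessel inequality for pairwise orthogonal matrices. -/
lemma bessel {ι : Type*} [DecidableEq ι] (s : Finset ι) (B : ι → M)
    (horth : ∀ i ∈ s, ∀ j ∈ s, i ≠ j → ip (B i) (B j) = 0) (e : M) :
    ∑ i ∈ s, (ip e (B i))^2 / ip (B i) (B i) ≤ ip e e := by
  set c : ι → ℝ := fun i => ip e (B i) / ip (B i) (B i) with hc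
  have key : 0 ≤ ip (e - ∑ i ∈ s, c i • B i) (e - ∑ i ∈ s, c i • B i) :=
    ip_self_nonneg _
  have expand : ip (e - ∑ i ∈ s, c i • B i) (e - ∑ i ∈ s, c i • B i)
      = ip e e - 2 * ∑ i ∈ s, c i * ip e (B i)
        + ∑ i ∈ s, ∑ j ∈ s, c i * c j * ip (B i) (B j) := by
    rw [ip_sub_left, ip_sub_right, ip_sub_right, ip_sum_right, ip_sum_left, ip_sum_left]
    have h1 : ∀ i ∈ s, ip e (c i • B i) = c i * ip e (B i) := fun i _ => ip_smul_right _ _ _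
    have h2 : ∀ i ∈ s, ip (c i • B i) e = c i * ip e (B i) := fun i _ => by
      rw [ip_smul_left, ip_symm]
    have h3 : ∀ i ∈ s, ip (c i • B i) (∑ j ∈ s, c j • B j)
        = ∑ j ∈ s, c i * c j * ip (B i) (B j) := fun i _ => by
      rw [ip_smul_left, ip_sum_right, Finset.mul_sum]
      exact Finset.sum_congr rfl fun j _ => by rw [ip_smul_right]; ring
    rw [Finset.sum_congr rfl h1, Finset.sum_congr rfl h2, Finset.sum_congr rfl h3]
    ring
  have diag : ∀ i ∈ s, ∑ j ∈ s, c i * c j * ip (B i) (B j)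
      = c i * c i * ip (B i) (B i) := by
    intro i hi
    apply Finset.sum_eq_single_of_mem i hi
    intro j hj hji
    rw [horth i hi j hj (fun h => hji (h.symm)), mul_zero]
  have term : ∀ i ∈ s, c i * ip e (B i) = (ip e (B i))^2 / ip (B i) (B i) := by
    intro i _
    rcases eq_or_ne (ip (B i) (B i)) 0 with h | h
    · simp [hc, h]
    · simp only [hc]; field_simp
  have term2 : ∀ i ∈ s, c i * c i * ip (B i) (B i)
      = (ip e (B i))^2 / ip (B i) (B i) := by
    intro i _
    rcases eq_or_ne (ip (B i) (B i)) 0 with h | h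
    · simp [hc, h]
    · simp only [hc]; field_simp
  rw [expand, Finset.sum_congr rfl diag, Finset.sum_congr rfl term,
    Finset.sum_congr rfl term2] at key
  linarith

end LiLi

namespace LiLi

/-- Fractional edge-weight bound: if `0 ≤ t ≤ 1` symmetric with zero diagonal and
total (ordered) mass `≤ 2U`, then `∑ tᵢⱼ (dᵢ-dⱼ)² ≤ (U+1) * 2 * ∑ dᵢ²`. -/
lemma graph_bound {n : ℕ} (d : Fin n → ℝ) (t : Fin n → Fin n → ℝ)
    (hsym : ∀ i j, t i j = t j i) (hnn : ∀ i j, 0 ≤ t i j)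
    (hdiag : ∀ i, t i i = 0) (h1 : ∀ i j, t i j ≤ 1)
    (U : ℝ) (hU : ∑ i, ∑ j, t i j ≤ 2 * U) :
    ∑ i, ∑ j, t i j * (d i - d j)^2 ≤ (U + 1) * (2 * ∑ i, (d i)^2) := by
  classical
  set δ : Fin n → ℝ := fun i => ∑ j, t i j with hδ
  have hδnn : ∀ i, 0 ≤ δ i := fun i => Finset.sum_nonneg fun j _ => hnn i j
  have hδge : ∀ i j, t i j ≤ δ i := fun i j =>
    Finset.single_le_sum (fun k _ => hnn i k) (Finset.mem_univ j)
  -- degree bound : δ i + δ j ≤ U + 1 when t i j > 0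
  have hdeg : ∀ i j, i ≠ j → δ i + δ j ≤ U + t i j := by
    intro i j hij
    have hpair : ({i, j} : Finset (Fin n)).sum δ = δ i + δ j := by
      rw [Finset.sum_pair hij]
    have hsubset : ({i, j} : Finset (Fin n)) ⊆ Finset.univ := Finset.subset_univ _
    have hsplit : ∑ a, δ a = δ i + δ j + ∑ a ∈ Finset.univ \ {i, j}, δ a := by
      rw [← hpair, add_comm, Finset.sum_sdiff hsubset]
    have hrow : ∀ a, a ∈ Finset.univ \ ({i, j} : Finset (Fin n)) → t a i + t a j ≤ δ a := by
      intro a _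
      have : ({i, j} : Finset (Fin n)).sum (t a) ≤ δ a :=
        Finset.sum_le_sum_of_subset_of_nonneg hsubset (fun k _ _ => hnn a k)
      rwa [Finset.sum_pair hij] at this
    have hcol : ∀ k, ∑ a ∈ Finset.univ \ ({i, j} : Finset (Fin n)), t a k
        = δ k - t i k - t j k := by
      intro k
      have : ∑ a ∈ Finset.univ \ ({i, j} : Finset (Fin n)), t a k
          = ∑ a, t a k - (t i k + t j k) := by
        rw [eq_sub_iff_add_eq, ← Finset.sum_pair (f := fun a => t a k) hij,
          Finset.sum_sdiff hsubset]
      rw [this]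
      have : ∑ a, t a k = δ k := by
        rw [hδ]; exact Finset.sum_congr rfl fun a _ => hsym a k
      rw [this]; ring
    have hlow : ∑ a ∈ Finset.univ \ ({i, j} : Finset (Fin n)), (t a i + t a j)
        ≤ ∑ a ∈ Finset.univ \ ({i, j} : Finset (Fin n)), δ a :=
      Finset.sum_le_sum hrow
    rw [Finset.sum_add_distrib, hcol i, hcol j] at hlow
    have htot : ∑ a, δ a ≤ 2 * U := hU
    have hii := hdiag i; have hjj := hdiag j
    have hji : t j i = t i j := hsym j i
    nlinarith [hsplit, hlow]
  -- per-pair bound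
  have key : ∀ i j, t i j * (d i - d j)^2
      ≤ (U + 1) * (t i j * ((d i)^2 / δ i) + t i j * ((d j)^2 / δ j)) := by
    intro i j
    rcases eq_or_lt_of_le (hnn i j) with h0 | hpos
    · rw [← h0]; simp
    · have hij : i ≠ j := by
        intro h; rw [h, hdiag j] at hpos; exact lt_irrefl _ hpos
      have hδi : 0 < δ i := lt_of_lt_of_le hpos (hδge i j)
      have hδj : 0 < δ j := lt_of_lt_of_le (by rw [hsym i j] at hpos; exact hpos) (hδge j i)
      have hCS : (d i - d j)^2 ≤ (δ i + δ j) * ((d i)^2 / δ i + (d j)^2 / δ j) := by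
        rw [div_add_div _ _ (ne_of_gt hδi) (ne_of_gt hδj), ← mul_div_assoc,
          le_div_iff₀ (by positivity)]
        nlinarith [sq_nonneg (d i * δ j + d j * δ i)]
      have hd : δ i + δ j ≤ U + 1 :=
        le_trans (hdeg i j hij) (by linarith [h1 i j])
      calc t i j * (d i - d j)^2
          ≤ t i j * ((δ i + δ j) * ((d i)^2 / δ i + (d j)^2 / δ j)) :=
            mul_le_mul_of_nonneg_left hCS (le_of_lt hpos)
        _ ≤ t i j * ((U + 1) * ((d i)^2 / δ i + (d j)^2 / δ j)) := by
            apply mul_le_mul_of_nonneg_left _ (le_of_lt hpos)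
            apply mul_le_mul_of_nonneg_right hd (by positivity)
        _ = (U + 1) * (t i j * ((d i)^2 / δ i) + t i j * ((d j)^2 / δ j)) := by ring
  -- row sums
  have hrowsum : ∀ i, ∑ j, t i j * ((d i)^2 / δ i) ≤ (d i)^2 := by
    intro i
    rw [← Finset.sum_mul]
    have hdd : (∑ j, t i j) = δ i := rfl
    rw [hdd]
    rcases eq_or_lt_of_le (hδnn i) with h0 | hpos
    · rw [← h0]; simpa using sq_nonneg (d i)
    · rw [mul_div_cancel₀ _ (ne_of_gt hpos)]
  have hcolsum : ∑ i, ∑ j, t i j * ((d j)^2 / δ j) ≤ ∑ j, (d j)^2 := by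
    rw [Finset.sum_comm]
    apply Finset.sum_le_sum
    intro j _
    have : ∑ i, t j i * ((d j)^2 / δ j) ≤ (d j)^2 := hrowsum j
    calc ∑ i, t i j * ((d j)^2 / δ j) = ∑ i, t j i * ((d j)^2 / δ j) :=
          Finset.sum_congr rfl fun i _ => by rw [hsym i j]
      _ ≤ (d j)^2 := this
  calc ∑ i, ∑ j, t i j * (d i - d j)^2
      ≤ ∑ i, ∑ j, (U + 1) * (t i j * ((d i)^2 / δ i) + t i j * ((d j)^2 / δ j)) :=
        Finset.sum_le_sum fun i _ => Finset.sum_le_sum fun j _ => key i j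
    _ = (U + 1) * (∑ i, ∑ j, t i j * ((d i)^2 / δ i)
          + ∑ i, ∑ j, t i j * ((d j)^2 / δ j)) := by
        simp_rw [mul_add, Finset.sum_add_distrib, Finset.mul_sum]
    _ ≤ (U + 1) * (∑ i, (d i)^2 + ∑ j, (d j)^2) := by
        apply mul_le_mul_of_nonneg_left _ ?_
        · exact add_le_add (Finset.sum_le_sum fun i _ => hrowsum i) hcolsum
        ·
          have : (0:ℝ) ≤ ∑ i, ∑ j, t i j :=
            Finset.sum_nonneg fun i _ => Finset.sum_nonneg fun j _ => hnn i j
          linarith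
    _ = (U + 1) * (2 * ∑ i, (d i)^2) := by ring
  
end LiLi
namespace LiLi
variable {m : ℕ}

section Conj
variable {V : Matrix (Fin m) (Fin m) ℝ}

lemma conj_mul (hV2 : V * Vᵀ = 1) (X Y : Matrix (Fin m) (Fin m) ℝ) :
    Vᵀ * (X * Y) * V = (Vᵀ * X * V) * (Vᵀ * Y * V) := by
  calc Vᵀ * (X * Y) * V = Vᵀ * X * (V * Vᵀ) * Y * V := by rw [hV2]; noncomm_ring
    _ = (Vᵀ * X * V) * (Vᵀ * Y * V) := by noncomm_ring

lemma conj_ip (hV2 : V * Vᵀ = 1) (X Y : Matrix (Fin m) (Fin m) ℝ) : ip (Vᵀ * X * V) (Vᵀ * Y * V) = ip X Y := by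
  unfold ip
  have h1 : (Vᵀ * X * V)ᵀ = Vᵀ * Xᵀ * V := by
    rw [Matrix.transpose_mul, Matrix.transpose_mul, Matrix.transpose_transpose, Matrix.mul_assoc]
  rw [h1, (conj_mul hV2 Xᵀ Y).symm, Matrix.trace_mul_cycle, ← Matrix.mul_assoc, hV2,
    Matrix.one_mul]

lemma conj_symm {X : Matrix (Fin m) (Fin m) ℝ} (hX : X.IsSymm) : (Vᵀ * X * V).IsSymm := by
  unfold Matrix.IsSymm
  rw [Matrix.transpose_mul, Matrix.transpose_mul, Matrix.transpose_transpose, hX.eq,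
    Matrix.mul_assoc]

end Conj

lemma ip_basis_ip (i j : Fin m) (hij : i ≠ j) (X : Matrix (Fin m) (Fin m) ℝ) (hX : ∀ a b, X a b = X b a) :
    ip (Matrix.of fun a b => (if a = i ∧ b = j then (1:ℝ) else 0)
      + (if a = j ∧ b = i then 1 else 0)) X = 2 * X i j := by
  rw [ip_eq_sum]
  simp only [Matrix.of_apply, add_mul, ite_mul, one_mul, zero_mul, Finset.sum_add_distrib,
    ite_and]
  simp only [Finset.sum_ite_eq', Finset.mem_univ, if_true]
  rw [hX j i]; ring

lemma ip_basis_self (i j : Fin m) (hij : i ≠ j) :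
    ip (Matrix.of fun a b => (if a = i ∧ b = j then (1:ℝ) else 0)
      + (if a = j ∧ b = i then 1 else 0))
      (Matrix.of fun a b => (if a = i ∧ b = j then (1:ℝ) else 0)
      + (if a = j ∧ b = i then 1 else 0)) = 2 := by
  rw [ip_eq_sum]
  simp only [Matrix.of_apply, ite_and]
  have : ∀ b a : Fin m,
      ((if b = i then if a = j then (1:ℝ) else 0 else 0)
        + (if b = j then if a = i then 1 else 0 else 0))
      * ((if b = i then if a = j then (1:ℝ) else 0 else 0)
        + (if b = j then if a = i then 1 else 0 else 0))
      = (if b = i then if a = j then (1:ℝ) else 0 else 0)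
        + (if b = j then if a = i then 1 else 0 else 0) := by
    intro b a
    by_cases h1 : b = i <;> by_cases h2 : b = j <;> by_cases h3 : a = j <;>
      by_cases h4 : a = i <;> simp_all <;> ring_nf <;> simp_all
  simp only [this, Finset.sum_add_distrib]
  simp only [Finset.sum_ite_eq', Finset.mem_univ, if_true]
  norm_num

end LiLi
namespace LiLi
variable {m : ℕ}

/-- Key lemma: for symmetric `A` and pairwise `ip`-orthogonal symmetric `B β`
with `ip (B β) (B β) ≤ K`, `∑ N([A, B β]) ≤ N(A) * (∑ N(B β) + K)`. -/
lemma key_lemma {ι : Type*} [DecidableEq ι] (s : Finset ι)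
    (A : Matrix (Fin m) (Fin m) ℝ) (hA : A.IsSymm)
    (B : ι → Matrix (Fin m) (Fin m) ℝ) (hBsymm : ∀ β ∈ s, (B β).IsSymm)
    (horth : ∀ β ∈ s, ∀ γ ∈ s, β ≠ γ → ip (B β) (B γ) = 0)
    (K : ℝ) (hK0 : 0 ≤ K) (hK : ∀ β ∈ s, ip (B β) (B β) ≤ K) :
    ∑ β ∈ s, ip (A * B β - B β * A) (A * B β - B β * A)
      ≤ ip A A * ((∑ β ∈ s, ip (B β) (B β)) + K) := by
  classical
  rcases eq_or_lt_of_le hK0 with hKz | hKpos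
  · -- K = 0 : all B β vanish
    have hB0 : ∀ β ∈ s, B β = 0 := by
      intro β hβ
      have h0 : ip (B β) (B β) = 0 := le_antisymm (hKz ▸ hK β hβ) (ip_self_nonneg _)
      ext i j
      exact ip_self_eq_zero h0 i j
    have hL : ∑ β ∈ s, ip (A * B β - B β * A) (A * B β - B β * A) = 0 :=
      Finset.sum_eq_zero fun β hβ => by rw [hB0 β hβ]; simp [ip]
    have hR : ∑ β ∈ s, ip (B β) (B β) = 0 :=
      Finset.sum_eq_zero fun β hβ => by rw [hB0 β hβ]; simp [ip]
    rw [hL, hR, ← hKz]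
    simp
  · -- spectral decomposition of A
    have hAH : A.IsHermitian := by
      rw [Matrix.IsHermitian, Matrix.conjTranspose_eq_transpose_of_trivial]
      exact hA.eq
    set V : Matrix (Fin m) (Fin m) ℝ := (hAH.eigenvectorUnitary : Matrix (Fin m) (Fin m) ℝ)
      with hVdef
    have hstar : star V = Vᵀ := by
      rw [Matrix.star_eq_conjTranspose, Matrix.conjTranspose_eq_transpose_of_trivial]
    have hV1 : Vᵀ * V = 1 := by
      rw [← hstar]
      exact Matrix.mem_unitaryGroup_iff'.mp hAH.eigenvectorUnitary.2
    have hV2 : V * Vᵀ = 1 := by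
      rw [← hstar]
      exact Matrix.mem_unitaryGroup_iff.mp hAH.eigenvectorUnitary.2
    set d : Fin m → ℝ := hAH.eigenvalues with hddef
    have hdiagA : Vᵀ * A * V = Matrix.diagonal d := by
      have h := hAH.conjStarAlgAut_star_eigenvectorUnitary
      rw [Unitary.conjStarAlgAut_star_apply] at h
      simp only [RCLike.ofReal_real_eq_id, Function.id_comp] at h
      rw [hstar] at h
      exact h
    set C : ι → Matrix (Fin m) (Fin m) ℝ := fun β => Vᵀ * B β * V with hCdef
    have hCsym : ∀ β ∈ s, ∀ a b, C β a b = C β b a := by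
      intro β hβ a b
      have h : (C β)ᵀ = C β := (conj_symm (V := V) (hBsymm β hβ)).eq
      exact (congrFun (congrFun h a) b).symm
    have hCip : ∀ β γ, ip (C β) (C γ) = ip (B β) (B γ) := fun β γ => conj_ip hV2 _ _
    -- norm of commutators via entries
    have hcommN : ∀ β ∈ s, ip (A * B β - B β * A) (A * B β - B β * A)
        = ∑ a, ∑ b, (d a - d b)^2 * (C β a b)^2 := by
      intro β hβ
      have hconj : Vᵀ * (A * B β - B β * A) * V
          = Matrix.diagonal d * C β - C β * Matrix.diagonal d := by
        rw [Matrix.mul_sub, Matrix.sub_mul, conj_mul hV2, conj_mul hV2, hdiagA]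
      rw [← conj_ip hV2 (A * B β - B β * A) (A * B β - B β * A), hconj, ip_self_eq]
      rw [Finset.sum_comm]
      apply Finset.sum_congr rfl; intro a _
      apply Finset.sum_congr rfl; intro b _
      have : (Matrix.diagonal d * C β - C β * Matrix.diagonal d) a b
          = (d a - d b) * C β a b := by
        simp [Matrix.sub_apply, Matrix.diagonal_mul, Matrix.mul_diagonal]
        ring
      rw [this, mul_pow]
    -- set up the fractional weights
    set t : Fin m → Fin m → ℝ := fun a b =>
      if a = b then 0 else (2 / K) * ∑ β ∈ s, (C β a b)^2 with htdef
    have hσnn : ∀ a b, (0:ℝ) ≤ ∑ β ∈ s, (C β a b)^2 :=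
      fun a b => Finset.sum_nonneg fun β _ => sq_nonneg _
    have htsym : ∀ a b, t a b = t b a := by
      intro a b
      rcases eq_or_ne a b with h | h
      · rw [h]
      · have h' : ¬ b = a := fun hh => h hh.symm
        simp only [htdef, if_neg h, if_neg h']
        congr 1
        exact Finset.sum_congr rfl fun β hβ => by rw [hCsym β hβ]
    have htnn : ∀ a b, 0 ≤ t a b := by
      intro a b
      by_cases h : a = b
      · simp [htdef, h]
      · simp only [htdef, if_neg h]
        exact mul_nonneg (by positivity) (hσnn a b)
    have htdiag : ∀ a, t a a = 0 := fun a => by simp [htdef]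
    have ht1 : ∀ a b, t a b ≤ 1 := by
      intro a b
      by_cases h : a = b
      · simp [htdef, h]
      · simp only [htdef, if_neg h]
        -- Bessel with the elementary symmetric matrix at (a,b)
        set e : Matrix (Fin m) (Fin m) ℝ := Matrix.of fun x y =>
          (if x = a ∧ y = b then (1:ℝ) else 0) + (if x = b ∧ y = a then 1 else 0) with hedef
        have hbess := bessel s C (fun β hβ γ hγ hne => by
          rw [hCip]; exact horth β hβ γ hγ hne) e
        rw [ip_basis_self a b h] at hbess
        have hterm : ∀ β ∈ s, (2 / K) * (C β a b)^2
            ≤ ((ip e (C β))^2 / ip (C β) (C β)) / 2 := by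
          intro β hβ
          rw [ip_basis_ip a b h (C β) (hCsym β hβ)]
          rcases eq_or_lt_of_le (ip_self_nonneg (C β)) with hz | hpos
          · have : C β a b = 0 := ip_self_eq_zero hz.symm a b
            rw [this]
            simp
          · have hle : ip (C β) (C β) ≤ K := by rw [hCip]; exact hK β hβ
            rw [mul_pow, div_div]
            have h2 : (2:ℝ)^2 * (C β a b)^2 / (ip (C β) (C β) * 2)
                = (2 / ip (C β) (C β)) * (C β a b)^2 := by
              field_simp
            rw [h2]
            apply mul_le_mul_of_nonneg_right _ (sq_nonneg _)
            apply div_le_div_of_nonneg_left (by norm_num) hpos hle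
        calc (2 / K) * ∑ β ∈ s, (C β a b)^2
            = ∑ β ∈ s, (2 / K) * (C β a b)^2 := Finset.mul_sum _ _ _
          _ ≤ ∑ β ∈ s, ((ip e (C β))^2 / ip (C β) (C β)) / 2 :=
              Finset.sum_le_sum hterm
          _ = (∑ β ∈ s, (ip e (C β))^2 / ip (C β) (C β)) / 2 := by
              rw [Finset.sum_div]
          _ ≤ 2 / 2 := by linarith
          _ = 1 := by norm_num
    set S : ℝ := ∑ β ∈ s, ip (B β) (B β) with hSdef
    have hSnn : 0 ≤ S := Finset.sum_nonneg fun β _ => ip_self_nonneg _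
    have htU : ∑ a, ∑ b, t a b ≤ 2 * (S / K) := by
      have hb : ∀ a b, t a b ≤ (2 / K) * ∑ β ∈ s, (C β a b)^2 := by
        intro a b
        by_cases h : a = b
        · simp only [htdef, if_pos h]
          exact mul_nonneg (by positivity) (hσnn a b)
        · simp [htdef, if_neg h]
      calc ∑ a, ∑ b, t a b ≤ ∑ a, ∑ b, (2 / K) * ∑ β ∈ s, (C β a b)^2 :=
            Finset.sum_le_sum fun a _ => Finset.sum_le_sum fun b _ => hb a b
        _ = (2 / K) * ∑ a, ∑ b, ∑ β ∈ s, (C β a b)^2 := by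
            simp_rw [← Finset.mul_sum]
        _ = (2 / K) * ∑ β ∈ s, ∑ a, ∑ b, (C β a b)^2 := by
            congr 1
            calc ∑ a, ∑ b, ∑ β ∈ s, (C β a b)^2
                = ∑ a, ∑ β ∈ s, ∑ b, (C β a b)^2 :=
                  Finset.sum_congr rfl fun a _ => Finset.sum_comm
              _ = ∑ β ∈ s, ∑ a, ∑ b, (C β a b)^2 := Finset.sum_comm
        _ = (2 / K) * S := by
            congr 1
            rw [hSdef]
            apply Finset.sum_congr rfl
            intro β hβ
            rw [← hCip β β, ip_self_eq]
            exact Finset.sum_comm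
        _ = 2 * (S / K) := by ring
    have hmain := graph_bound d t htsym htnn htdiag ht1 (S / K) htU
    -- identify the LHS
    have hid : ∑ β ∈ s, ip (A * B β - B β * A) (A * B β - B β * A)
        = (K / 2) * ∑ a, ∑ b, t a b * (d a - d b)^2 := by
      rw [Finset.sum_congr rfl hcommN]
      have swapL : (∑ β ∈ s, ∑ a, ∑ b, (d a - d b)^2 * (C β a b)^2)
          = ∑ a, ∑ b, ∑ β ∈ s, (d a - d b)^2 * (C β a b)^2 := by
        calc ∑ β ∈ s, ∑ a, ∑ b, (d a - d b)^2 * (C β a b)^2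
            = ∑ a, ∑ β ∈ s, ∑ b, (d a - d b)^2 * (C β a b)^2 := Finset.sum_comm
          _ = ∑ a, ∑ b, ∑ β ∈ s, (d a - d b)^2 * (C β a b)^2 :=
              Finset.sum_congr rfl fun a _ => Finset.sum_comm
      rw [swapL, Finset.mul_sum]
      apply Finset.sum_congr rfl; intro a _
      rw [Finset.mul_sum]
      apply Finset.sum_congr rfl; intro b _
      rcases eq_or_ne a b with h | h
      · subst h
        simp [htdef]
      · simp only [htdef, if_neg h]
        rw [← Finset.mul_sum]
        field_simp
    have hAA : ip A A = ∑ a, (d a)^2 := by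
      rw [← conj_ip hV2 A A, hdiagA, ip_self_eq]
      have : ∀ a b : Fin m, (Matrix.diagonal d b a)^2 = if b = a then (d a)^2 else 0 := by
        intro a b
        by_cases h : b = a
        · simp [Matrix.diagonal_apply, h]
        · simp [Matrix.diagonal_apply, h]
      calc ∑ a, ∑ b, (Matrix.diagonal d b a)^2
          = ∑ a, ∑ b, if b = a then (d a)^2 else 0 :=
            Finset.sum_congr rfl fun a _ => Finset.sum_congr rfl fun b _ => this a b
        _ = ∑ a, (d a)^2 := by
            apply Finset.sum_congr rfl; intro a _
            simp [Finset.sum_ite_eq']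
    rw [hid, hAA]
    calc (K / 2) * ∑ a, ∑ b, t a b * (d a - d b)^2
        ≤ (K / 2) * ((S / K + 1) * (2 * ∑ a, (d a)^2)) := by
          apply mul_le_mul_of_nonneg_left hmain (by positivity)
      _ = (S + K) * ∑ a, (d a)^2 := by
          field_simp
      _ = (∑ a, (d a)^2) * (S + K) := by ring

end LiLi
namespace LiLi
variable {m : ℕ}

/-- Rotation invariance of a quadratic expression built from a bilinear form. -/
lemma rot {E : Type*} [AddCommGroup E] [Module ℝ E] {p : ℕ} (b : E →ₗ[ℝ] E →ₗ[ℝ] ℝ)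
    (O : Matrix (Fin p) (Fin p) ℝ)
    (hO : ∀ γ δ, (∑ α, O α γ * O α δ) = if γ = δ then (1:ℝ) else 0)
    (f : Fin p → E) :
    ∑ α, b (∑ γ, O α γ • f γ) (∑ γ, O α γ • f γ) = ∑ γ, b (f γ) (f γ) := by
  have expand : ∀ α, b (∑ γ, O α γ • f γ) (∑ γ, O α γ • f γ)
      = ∑ γ, ∑ δ, (O α γ * O α δ) * b (f γ) (f δ) := by
    intro α
    rw [map_sum]
    conv_rhs => rw [Finset.sum_comm]
    apply Finset.sum_congr rfl; intro δ _
    rw [map_sum, LinearMap.sum_apply]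
    apply Finset.sum_congr rfl; intro γ _
    rw [_root_.map_smul, _root_.map_smul b, LinearMap.smul_apply, smul_eq_mul, smul_eq_mul]
    ring
  rw [Finset.sum_congr rfl fun α _ => expand α]
  calc ∑ α, ∑ γ, ∑ δ, (O α γ * O α δ) * b (f γ) (f δ)
      = ∑ γ, ∑ δ, (∑ α, O α γ * O α δ) * b (f γ) (f δ) := by
        rw [Finset.sum_comm]
        apply Finset.sum_congr rfl; intro γ _
        rw [Finset.sum_comm]
        apply Finset.sum_congr rfl; intro δ _
        rw [Finset.sum_mul]
    _ = ∑ γ, b (f γ) (f γ) := by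
        simp only [hO, ite_mul, one_mul, zero_mul]
        apply Finset.sum_congr rfl; intro γ _
        simp [Finset.sum_ite_eq]

/-- the trace form as a bilinear map -/
def ipL : Matrix (Fin m) (Fin m) ℝ →ₗ[ℝ] Matrix (Fin m) (Fin m) ℝ →ₗ[ℝ] ℝ :=
  LinearMap.mk₂ ℝ ip ip_add_left (fun c X Y => by rw [ip_smul_left]; rfl)
    (fun Z X Y => ip_add_right X Y Z) (fun c Z X => by rw [ip_smul_right]; rfl)

@[simp] lemma ipL_apply (X Y : Matrix (Fin m) (Fin m) ℝ) : ipL X Y = ip X Y := rfl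

def mulL : ℝ →ₗ[ℝ] ℝ →ₗ[ℝ] ℝ := LinearMap.mul ℝ ℝ

@[simp] lemma mulL_apply (x y : ℝ) : mulL x y = x * y := rfl

end LiLi
open Matrix Finset in
/-- The Li–Li inequality for symmetric matrices, where `N A = trace (Aᵀ * A)`
is the squared Frobenius norm. -/
theorem li_li_inequality (m p : ℕ) (hp : 2 ≤ p)
    (A : Fin p → Matrix (Fin m) (Fin m) ℝ) (hsymm : ∀ α, (A α).IsSymm) :
    (∑ α, ∑ β,
        (((A α * A β - A β * A α)ᵀ * (A α * A β - A β * A α)).trace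
          + ((A α * A β).trace) ^ 2))
      ≤ (3 / 2 : ℝ) * (∑ α, ((A α)ᵀ * A α).trace) ^ 2 := by
  classical
  -- restate the goal in terms of `LiLi.ip`
  have htr : ∀ α β, (A α * A β).trace = LiLi.ip (A α) (A β) := by
    intro α β
    unfold LiLi.ip
    rw [(hsymm α).eq]
  have htr2 : ∀ α β, ((A α * A β - A β * A α)ᵀ * (A α * A β - A β * A α)).trace
      = LiLi.ip (A α * A β - A β * A α) (A α * A β - A β * A α) := fun _ _ => rfl
  have htr3 : ∀ α, ((A α)ᵀ * A α).trace = LiLi.ip (A α) (A α) := fun _ => rfl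
  simp only [htr, htr2, htr3]
  -- Gram matrix and its diagonalization
  set S : Matrix (Fin p) (Fin p) ℝ := Matrix.of fun α β => LiLi.ip (A α) (A β) with hS
  have hSH : S.IsHermitian := by
    rw [Matrix.IsHermitian, Matrix.conjTranspose_eq_transpose_of_trivial]
    ext α β
    exact LiLi.ip_symm (A β) (A α)
  set W : Matrix (Fin p) (Fin p) ℝ := (hSH.eigenvectorUnitary : Matrix (Fin p) (Fin p) ℝ)
    with hW
  have hstar : star W = Wᵀ := by
    rw [Matrix.star_eq_conjTranspose, Matrix.conjTranspose_eq_transpose_of_trivial]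
  have hW2 : W * Wᵀ = 1 := by
    rw [← hstar]
    exact Matrix.mem_unitaryGroup_iff.mp hSH.eigenvectorUnitary.2
  set O : Matrix (Fin p) (Fin p) ℝ := Wᵀ with hO
  have hOorth : ∀ γ δ, (∑ α, O α γ * O α δ) = if γ = δ then (1:ℝ) else 0 := by
    intro γ δ
    have h1 : Oᵀ * O = 1 := by
      rw [hO, Matrix.transpose_transpose, hW2]
    calc (∑ α, O α γ * O α δ) = (Oᵀ * O) γ δ := by
          simp [Matrix.mul_apply, Matrix.transpose_apply]
      _ = (1 : Matrix (Fin p) (Fin p) ℝ) γ δ := by rw [h1]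
      _ = if γ = δ then (1:ℝ) else 0 := Matrix.one_apply
  set A' : Fin p → Matrix (Fin m) (Fin m) ℝ := fun α => ∑ γ, O α γ • A γ with hA'
  have hA'symm : ∀ α, (A' α).IsSymm := by
    intro α
    unfold Matrix.IsSymm
    rw [Matrix.transpose_sum]
    apply Finset.sum_congr rfl
    intro γ _
    rw [Matrix.transpose_smul, (hsymm γ).eq]
  -- the Gram matrix of A' is diagonal
  have hgram : ∀ α β, LiLi.ip (A' α) (A' β) = (O * S * Oᵀ) α β := by
    intro α β
    have e1 : LiLi.ip (A' α) (A' β)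
        = ∑ γ, O α γ * ∑ δ, O β δ * LiLi.ip (A γ) (A δ) := by
      rw [LiLi.ip_sum_left]
      apply Finset.sum_congr rfl
      intro γ _
      rw [LiLi.ip_smul_left]
      congr 1
      rw [LiLi.ip_sum_right]
      apply Finset.sum_congr rfl
      intro δ _
      rw [LiLi.ip_smul_right]
    rw [e1]
    simp only [Matrix.mul_apply, Matrix.transpose_apply, Finset.sum_mul, Finset.mul_sum]
    rw [Finset.sum_comm]
    apply Finset.sum_congr rfl
    intro δ _
    apply Finset.sum_congr rfl
    intro γ _
    have hSs : S γ δ = LiLi.ip (A γ) (A δ) := rfl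
    rw [hSs]
    ring
  have hdiagS : O * S * Oᵀ = Matrix.diagonal hSH.eigenvalues := by
    have h := hSH.conjStarAlgAut_star_eigenvectorUnitary
    rw [Unitary.conjStarAlgAut_star_apply] at h
    simp only [RCLike.ofReal_real_eq_id, Function.id_comp] at h
    rw [hstar] at h
    rw [hO, Matrix.transpose_transpose]
    exact h
  have horthA' : ∀ α β, α ≠ β → LiLi.ip (A' α) (A' β) = 0 := by
    intro α β hne
    rw [hgram, hdiagS]
    simp [Matrix.diagonal_apply, hne]
  set Nv : Fin p → ℝ := fun α => LiLi.ip (A' α) (A' α) with hNv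
  have hNnn : ∀ α, 0 ≤ Nv α := fun α => LiLi.ip_self_nonneg _
  -- invariance of the three sums
  have inv1 : ∑ α, LiLi.ip (A' α) (A' α) = ∑ α, LiLi.ip (A α) (A α) := by
    have h := LiLi.rot LiLi.ipL O hOorth A
    calc ∑ α, LiLi.ip (A' α) (A' α)
        = ∑ α, LiLi.ipL (∑ γ, O α γ • A γ) (∑ γ, O α γ • A γ) := rfl
      _ = ∑ γ, LiLi.ipL (A γ) (A γ) := h
      _ = ∑ α, LiLi.ip (A α) (A α) := rfl
  have inv2 : ∑ α, ∑ β, (LiLi.ip (A α) (A β))^2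
      = ∑ α, ∑ β, (LiLi.ip (A' α) (A' β))^2 := by
    have step1 : ∀ α, ∑ β, (LiLi.ip (A' α) (A' β))^2
        = ∑ δ, (LiLi.ip (A' α) (A δ))^2 := by
      intro α
      have hx : ∀ β, LiLi.ip (A' α) (A' β)
          = ∑ δ, O β δ • LiLi.ip (A' α) (A δ) := by
        intro β
        rw [show A' β = ∑ δ, O β δ • A δ from rfl, LiLi.ip_sum_right]
        exact Finset.sum_congr rfl fun δ _ => by
          rw [LiLi.ip_smul_right]; rfl
      calc ∑ β, (LiLi.ip (A' α) (A' β))^2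
          = ∑ β, LiLi.mulL (∑ δ, O β δ • LiLi.ip (A' α) (A δ))
              (∑ δ, O β δ • LiLi.ip (A' α) (A δ)) := by
            apply Finset.sum_congr rfl; intro β _
            rw [LiLi.mulL_apply, ← hx β, sq]
        _ = ∑ δ, LiLi.mulL (LiLi.ip (A' α) (A δ)) (LiLi.ip (A' α) (A δ)) :=
            LiLi.rot LiLi.mulL O hOorth _
        _ = ∑ δ, (LiLi.ip (A' α) (A δ))^2 := by
            apply Finset.sum_congr rfl; intro δ _
            rw [LiLi.mulL_apply, sq]
    have step2 : ∀ δ, ∑ α, (LiLi.ip (A' α) (A δ))^2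
        = ∑ γ, (LiLi.ip (A γ) (A δ))^2 := by
      intro δ
      have hx : ∀ α, LiLi.ip (A' α) (A δ)
          = ∑ γ, O α γ • LiLi.ip (A γ) (A δ) := by
        intro α
        rw [show A' α = ∑ γ, O α γ • A γ from rfl, LiLi.ip_sum_left]
        exact Finset.sum_congr rfl fun γ _ => by
          rw [LiLi.ip_smul_left]; rfl
      calc ∑ α, (LiLi.ip (A' α) (A δ))^2
          = ∑ α, LiLi.mulL (∑ γ, O α γ • LiLi.ip (A γ) (A δ))
              (∑ γ, O α γ • LiLi.ip (A γ) (A δ)) := by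
            apply Finset.sum_congr rfl; intro α _
            rw [LiLi.mulL_apply, ← hx α, sq]
        _ = ∑ γ, LiLi.mulL (LiLi.ip (A γ) (A δ)) (LiLi.ip (A γ) (A δ)) :=
            LiLi.rot LiLi.mulL O hOorth _
        _ = ∑ γ, (LiLi.ip (A γ) (A δ))^2 := by
            apply Finset.sum_congr rfl; intro γ _
            rw [LiLi.mulL_apply, sq]
    calc ∑ α, ∑ β, (LiLi.ip (A α) (A β))^2
        = ∑ β, ∑ α, (LiLi.ip (A α) (A β))^2 := Finset.sum_comm
      _ = ∑ β, ∑ α, (LiLi.ip (A' α) (A β))^2 := by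
          exact (Finset.sum_congr rfl fun β _ => (step2 β).symm)
      _ = ∑ α, ∑ β, (LiLi.ip (A' α) (A β))^2 := Finset.sum_comm
      _ = ∑ α, ∑ β, (LiLi.ip (A' α) (A' β))^2 :=
          Finset.sum_congr rfl fun α _ => (step1 α).symm
  have inv3 : ∑ α, ∑ β, LiLi.ip (A α * A β - A β * A α) (A α * A β - A β * A α)
      = ∑ α, ∑ β, LiLi.ip (A' α * A' β - A' β * A' α) (A' α * A' β - A' β * A' α) := by
    have hc2 : ∀ (X : Matrix (Fin m) (Fin m) ℝ) β,
        X * A' β - A' β * X = ∑ δ, O β δ • (X * A δ - A δ * X) := by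
      intro X β
      rw [show A' β = ∑ δ, O β δ • A δ from rfl, Finset.mul_sum, Finset.sum_mul,
        ← Finset.sum_sub_distrib]
      apply Finset.sum_congr rfl; intro δ _
      rw [Matrix.mul_smul, Matrix.smul_mul, smul_sub]
    have hc1 : ∀ (Y : Matrix (Fin m) (Fin m) ℝ) β,
        A' β * Y - Y * A' β = ∑ γ, O β γ • (A γ * Y - Y * A γ) := by
      intro Y β
      rw [show A' β = ∑ γ, O β γ • A γ from rfl, Finset.mul_sum, Finset.sum_mul,
        ← Finset.sum_sub_distrib]
      apply Finset.sum_congr rfl; intro γ _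
      rw [Matrix.mul_smul, Matrix.smul_mul, smul_sub]
    have step1 : ∀ α, ∑ β, LiLi.ip (A' α * A' β - A' β * A' α) (A' α * A' β - A' β * A' α)
        = ∑ δ, LiLi.ip (A' α * A δ - A δ * A' α) (A' α * A δ - A δ * A' α) := by
      intro α
      calc ∑ β, LiLi.ip (A' α * A' β - A' β * A' α) (A' α * A' β - A' β * A' α)
          = ∑ β, LiLi.ipL (∑ δ, O β δ • (A' α * A δ - A δ * A' α))
              (∑ δ, O β δ • (A' α * A δ - A δ * A' α)) := by
            apply Finset.sum_congr rfl; intro β _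
            rw [LiLi.ipL_apply, ← hc2 (A' α) β]
        _ = ∑ δ, LiLi.ipL (A' α * A δ - A δ * A' α) (A' α * A δ - A δ * A' α) :=
            LiLi.rot LiLi.ipL O hOorth _
        _ = ∑ δ, LiLi.ip (A' α * A δ - A δ * A' α) (A' α * A δ - A δ * A' α) := rfl
    have step2 : ∀ δ, ∑ α, LiLi.ip (A' α * A δ - A δ * A' α) (A' α * A δ - A δ * A' α)
        = ∑ γ, LiLi.ip (A γ * A δ - A δ * A γ) (A γ * A δ - A δ * A γ) := by
      intro δ
      calc ∑ α, LiLi.ip (A' α * A δ - A δ * A' α) (A' α * A δ - A δ * A' α)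
          = ∑ α, LiLi.ipL (∑ γ, O α γ • (A γ * A δ - A δ * A γ))
              (∑ γ, O α γ • (A γ * A δ - A δ * A γ)) := by
            apply Finset.sum_congr rfl; intro α _
            rw [LiLi.ipL_apply, ← hc1 (A δ) α]
        _ = ∑ γ, LiLi.ipL (A γ * A δ - A δ * A γ) (A γ * A δ - A δ * A γ) :=
            LiLi.rot LiLi.ipL O hOorth _
        _ = ∑ γ, LiLi.ip (A γ * A δ - A δ * A γ) (A γ * A δ - A δ * A γ) := rfl
    calc ∑ α, ∑ β, LiLi.ip (A α * A β - A β * A α) (A α * A β - A β * A α)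
        = ∑ β, ∑ α, LiLi.ip (A α * A β - A β * A α) (A α * A β - A β * A α) :=
          Finset.sum_comm
      _ = ∑ β, ∑ α, LiLi.ip (A' α * A β - A β * A' α) (A' α * A β - A β * A' α) :=
          Finset.sum_congr rfl fun β _ => (step2 β).symm
      _ = ∑ α, ∑ β, LiLi.ip (A' α * A β - A β * A' α) (A' α * A β - A β * A' α) :=
          Finset.sum_comm
      _ = ∑ α, ∑ β, LiLi.ip (A' α * A' β - A' β * A' α) (A' α * A' β - A' β * A' α) :=
          Finset.sum_congr rfl fun α _ => (step1 α).symm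
  -- choose a maximal index
  obtain ⟨m₁, -, hm₁⟩ : ∃ x ∈ Finset.univ, ∀ y ∈ Finset.univ, Nv y ≤ Nv x :=
    Finset.exists_max_image Finset.univ Nv ⟨⟨0, by omega⟩, Finset.mem_univ _⟩
  set T : ℝ := ∑ α, Nv α with hT
  have hTerase : ∀ α, ∑ β ∈ Finset.univ.erase α, Nv β = T - Nv α := by
    intro α
    rw [eq_sub_iff_add_eq, add_comm]
    exact Finset.add_sum_erase Finset.univ Nv (Finset.mem_univ α)
  set K : Fin p → ℝ := fun α => if α = m₁ then T - Nv m₁ else Nv m₁ with hK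
  have hTP : 0 ≤ T - Nv m₁ := by
    rw [← hTerase m₁]
    exact Finset.sum_nonneg fun β _ => hNnn β
  -- key lemma application
  have hKey : ∀ α, ∑ β ∈ Finset.univ.erase α,
      LiLi.ip (A' α * A' β - A' β * A' α) (A' α * A' β - A' β * A' α)
      ≤ Nv α * ((T - Nv α) + K α) := by
    intro α
    have hK0 : 0 ≤ K α := by
      simp only [hK]
      by_cases h : α = m₁
      · rw [if_pos h]; exact hTP
      · rw [if_neg h]; exact hNnn m₁
    have hKb : ∀ β ∈ Finset.univ.erase α, LiLi.ip (A' β) (A' β) ≤ K α := by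
      intro β hβ
      simp only [hK]
      by_cases h : α = m₁
      · rw [if_pos h]
        rw [← hTerase m₁]
        apply Finset.single_le_sum (fun γ _ => hNnn γ)
        rw [Finset.mem_erase] at hβ ⊢
        exact ⟨by rw [← h]; exact hβ.1, Finset.mem_univ β⟩
      · rw [if_neg h]
        exact hm₁ β (Finset.mem_univ β)
    have h := LiLi.key_lemma (Finset.univ.erase α) (A' α) (hA'symm α) A'
      (fun β _ => hA'symm β)
      (fun β hβ γ hγ hne => horthA' β γ hne)
      (K α) hK0 hKb
    rwa [hTerase α] at h
  -- sum over β including the vanishing diagonal term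
  have hCommBound : ∑ α, ∑ β, LiLi.ip (A' α * A' β - A' β * A' α) (A' α * A' β - A' β * A' α)
      ≤ ∑ α, Nv α * ((T - Nv α) + K α) := by
    apply Finset.sum_le_sum
    intro α _
    have hdiag0 : LiLi.ip (A' α * A' α - A' α * A' α) (A' α * A' α - A' α * A' α) = 0 := by
      rw [sub_self]
      simp [LiLi.ip]
    calc ∑ β, LiLi.ip (A' α * A' β - A' β * A' α) (A' α * A' β - A' β * A' α)
        = LiLi.ip (A' α * A' α - A' α * A' α) (A' α * A' α - A' α * A' α)
          + ∑ β ∈ Finset.univ.erase α,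
            LiLi.ip (A' α * A' β - A' β * A' α) (A' α * A' β - A' β * A' α) :=
          (Finset.add_sum_erase Finset.univ _ (Finset.mem_univ α)).symm
      _ = ∑ β ∈ Finset.univ.erase α,
            LiLi.ip (A' α * A' β - A' β * A' α) (A' α * A' β - A' β * A' α) := by
          rw [hdiag0, zero_add]
      _ ≤ Nv α * ((T - Nv α) + K α) := hKey α
  -- square-sum identification
  have hipsq : ∑ α, ∑ β, (LiLi.ip (A' α) (A' β))^2 = ∑ α, (Nv α)^2 := by
    apply Finset.sum_congr rfl
    intro α _
    apply Finset.sum_eq_single_of_mem α (Finset.mem_univ α)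
    intro β _ hβα
    rw [horthA' α β (fun h => hβα h.symm)]
    exact zero_pow two_ne_zero
  -- scalar conclusion
  have hscal : ∑ α, Nv α * ((T - Nv α) + K α) + ∑ α, (Nv α)^2 ≤ (3/2 : ℝ) * T^2 := by
    have e1 : ∑ α, Nv α * ((T - Nv α) + K α) + ∑ α, (Nv α)^2
        = T * T + ∑ α, Nv α * K α := by
      rw [← Finset.sum_add_distrib]
      have hpt : ∀ α, Nv α * ((T - Nv α) + K α) + (Nv α)^2
          = Nv α * T + Nv α * K α := fun α => by ring
      rw [Finset.sum_congr rfl fun α _ => hpt α, Finset.sum_add_distrib,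
        ← Finset.sum_mul, ← hT]
    have e2 : ∑ α, Nv α * K α = 2 * (Nv m₁ * (T - Nv m₁)) := by
      rw [← Finset.add_sum_erase Finset.univ (fun α => Nv α * K α) (Finset.mem_univ m₁)]
      have h1 : K m₁ = T - Nv m₁ := by simp [hK]
      have h2 : ∑ α ∈ Finset.univ.erase m₁, Nv α * K α
          = (T - Nv m₁) * Nv m₁ := by
        rw [← hTerase m₁, Finset.sum_mul]
        apply Finset.sum_congr rfl
        intro α hα
        have : K α = Nv m₁ := by
          simp only [hK]
          rw [if_neg (Finset.ne_of_mem_erase hα)]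
        rw [this]
      rw [h1, h2]
      ring
    rw [e1, e2]
    nlinarith [sq_nonneg (T - 2 * Nv m₁)]
  -- final chain
  calc ∑ α, ∑ β, (LiLi.ip (A α * A β - A β * A α) (A α * A β - A β * A α)
        + (LiLi.ip (A α) (A β))^2)
      = ∑ α, ∑ β, LiLi.ip (A α * A β - A β * A α) (A α * A β - A β * A α)
        + ∑ α, ∑ β, (LiLi.ip (A α) (A β))^2 := by
        rw [← Finset.sum_add_distrib]
        exact Finset.sum_congr rfl fun α _ => Finset.sum_add_distrib
    _ = ∑ α, ∑ β, LiLi.ip (A' α * A' β - A' β * A' α) (A' α * A' β - A' β * A' α)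
        + ∑ α, (Nv α)^2 := by rw [inv3, inv2, hipsq]
    _ ≤ ∑ α, Nv α * ((T - Nv α) + K α) + ∑ α, (Nv α)^2 := by
        exact add_le_add_left hCommBound _
    _ ≤ (3/2 : ℝ) * T^2 := hscal
    _ = (3/2 : ℝ) * (∑ α, LiLi.ip (A α) (A α))^2 := by rw [inv1]
end

section
/- Let $A_1, A_2$ be real symmetric $m \times m$ matrices satisfying the equality case of the Li-Li inequality nontrivially, i.e., $N(A_1 A_2 - A_2 A_1) + N(A_2 A_1 - A_1 A_2) + (\operatorname{trace}(A_1 A_2))^2 + (\operatorname{trace}(A_2 A_1))^2 + (\operatorname{trace} A_1^2)^2 + (\operatorname{trace} A_2^2)^2 = \frac{3}{2}(N(A_1) + N(A_2))^2$ with $A_1, A_2$ not both zero. Then $N(A_1) = N(A_2)$, $\operatorname{trace}(A_1 A_2) = 0$, and $\operatorname{trace} A_1 = \operatorname{trace} A_2 = 0$. -/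
open Matrix

open Finset in
set_option maxHeartbeats 800000 in
lemma li_li_key (m : ℕ) (a : Fin m → ℝ) (B : Matrix (Fin m) (Fin m) ℝ)
    (heq : 2 * (∑ p : Fin m × Fin m, ((a p.1 - a p.2) * B p.1 p.2) ^ 2)
        + 2 * (∑ i, a i * B i i) ^ 2 + (∑ i, (a i) ^ 2) ^ 2
        + (∑ p : Fin m × Fin m, (B p.1 p.2) ^ 2) ^ 2
      = (3 / 2 : ℝ) * ((∑ i, (a i) ^ 2) + ∑ p : Fin m × Fin m, (B p.1 p.2) ^ 2) ^ 2)
    (hne : ¬(a = 0 ∧ B = 0)) :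
    (∑ i, (a i) ^ 2) = (∑ p : Fin m × Fin m, (B p.1 p.2) ^ 2)
      ∧ (∑ i, a i * B i i) = 0 ∧ (∑ i, a i) = 0 ∧ (∑ i, B i i) = 0 := by
  classical
  set Sa := ∑ i, (a i) ^ 2 with hSa
  set n2 := ∑ p : Fin m × Fin m, (B p.1 p.2) ^ 2 with hn2
  set t := ∑ i, a i * B i i with ht
  set N := ∑ p : Fin m × Fin m, ((a p.1 - a p.2) * B p.1 p.2) ^ 2 with hN
  have hSa0 : 0 ≤ Sa := Finset.sum_nonneg fun i _ => sq_nonneg _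
  have hn20 : 0 ≤ n2 := Finset.sum_nonneg fun p _ => sq_nonneg _
  set Sd := ∑ i, (B i i) ^ 2 with hSd
  have hSd0 : 0 ≤ Sd := Finset.sum_nonneg fun i _ => sq_nonneg _
  set So := ∑ p ∈ Finset.univ.filter (fun p : Fin m × Fin m => p.1 ≠ p.2), (B p.1 p.2) ^ 2
    with hSo
  have hSo0 : 0 ≤ So := Finset.sum_nonneg fun p _ => sq_nonneg _
  have hsplit : n2 = Sd + So := by
    rw [hn2, ← Finset.sum_filter_add_sum_filter_not Finset.univ
      (fun p : Fin m × Fin m => p.1 = p.2)]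
    congr 1
    rw [Finset.sum_filter, Fintype.sum_prod_type, hSd]
    simp
  -- pairwise bound
  have hpair : ∀ i j : Fin m, i ≠ j → (a i - a j) ^ 2 ≤ 2 * Sa := by
    intro i j hij
    have hsub : (a i)^2 + (a j)^2 ≤ Sa := by
      have : ∑ k ∈ ({i, j} : Finset (Fin m)), (a k)^2 ≤ Sa :=
        Finset.sum_le_sum_of_subset_of_nonneg (Finset.subset_univ _)
          (fun k _ _ => sq_nonneg _)
      rwa [Finset.sum_pair hij] at this
    nlinarith [sq_nonneg (a i + a j)]
  have hNoff : N = ∑ p ∈ Finset.univ.filter (fun p : Fin m × Fin m => p.1 ≠ p.2),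
      ((a p.1 - a p.2) * B p.1 p.2) ^ 2 := by
    rw [hN, eq_comm]
    apply Finset.sum_subset (Finset.filter_subset _ _)
    intro p _ hp
    simp only [Finset.mem_filter, Finset.mem_univ, true_and, not_not] at hp
    simp [hp]
  have hle : ∀ p ∈ Finset.univ.filter (fun p : Fin m × Fin m => p.1 ≠ p.2),
      ((a p.1 - a p.2) * B p.1 p.2) ^ 2 ≤ 2 * Sa * (B p.1 p.2) ^ 2 := by
    intro p hp
    simp only [Finset.mem_filter] at hp
    have := hpair p.1 p.2 hp.2
    nlinarith [sq_nonneg (B p.1 p.2)]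
  have hNle : N ≤ 2 * Sa * So := by
    rw [hNoff, hSo, Finset.mul_sum]
    exact Finset.sum_le_sum hle
  have hCS : t ^ 2 ≤ Sa * Sd := by
    have := Finset.sum_mul_sq_le_sq_mul_sq Finset.univ a (fun i => B i i)
    simpa [ht, hSa, hSd] using this
  -- degenerate case Sa = 0
  by_cases hSaz : Sa = 0
  · exfalso
    have ha : a = 0 := by
      funext i
      have := (Finset.sum_eq_zero_iff_of_nonneg (fun i _ => sq_nonneg (a i))).mp hSaz i
        (Finset.mem_univ i)
      exact pow_eq_zero_iff two_ne_zero |>.mp this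
    have hN0 : N = 0 := by
      rw [hN]; apply Finset.sum_eq_zero; intro p _; simp [ha]
    have ht0 : t = 0 := by
      rw [ht]; apply Finset.sum_eq_zero; intro i _; simp [ha]
    have hn2z : n2 = 0 := by nlinarith
    have hB : B = 0 := by
      ext i j
      have := (Finset.sum_eq_zero_iff_of_nonneg
        (fun p : Fin m × Fin m => fun _ => sq_nonneg (B p.1 p.2))).mp hn2z (i, j)
        (Finset.mem_univ _)
      exact pow_eq_zero_iff two_ne_zero |>.mp this
    exact hne ⟨ha, hB⟩
  have hSapos : 0 < Sa := lt_of_le_of_ne hSa0 (Ne.symm hSaz)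
  -- squeeze
  have hSo' : So = n2 - Sd := by linarith
  rw [hSo'] at hNle
  have hq : (Sa - n2) ^ 2 + 4 * (Sa * Sd) ≤ 0 := by nlinarith [hNle, hCS, heq]
  have hSan2 : Sa = n2 := by
    have h0 : (Sa - n2) ^ 2 = 0 :=
      le_antisymm (by nlinarith [mul_nonneg hSa0 hSd0]) (sq_nonneg _)
    have := pow_eq_zero_iff two_ne_zero |>.mp h0
    linarith [sub_eq_zero.mp this]
  have hSdz : Sd = 0 := by
    by_contra h
    have hSdpos : 0 < Sd := lt_of_le_of_ne hSd0 (Ne.symm h)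
    nlinarith [mul_pos hSapos hSdpos, sq_nonneg (Sa - n2)]
  have hdiag : ∀ i, B i i = 0 := by
    intro i
    have := (Finset.sum_eq_zero_iff_of_nonneg (fun i _ => sq_nonneg (B i i))).mp hSdz i
      (Finset.mem_univ i)
    exact pow_eq_zero_iff two_ne_zero |>.mp this
  have ht0 : t = 0 := by
    rw [ht]; apply Finset.sum_eq_zero; intro i _; simp [hdiag]
  have htrB : (∑ i, B i i) = 0 := Finset.sum_eq_zero fun i _ => hdiag i
  refine ⟨hSan2, ht0, ?_, htrB⟩
  -- equality in CdCK gives trace a = 0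
  have hSoSa : So = Sa := by linarith
  have hNeq : N = 2 * Sa * So := by nlinarith [heq, ht0, hSan2, hSoSa]
  have hsum : ∑ p ∈ Finset.univ.filter (fun p : Fin m × Fin m => p.1 ≠ p.2),
      ((a p.1 - a p.2) * B p.1 p.2) ^ 2
      = ∑ p ∈ Finset.univ.filter (fun p : Fin m × Fin m => p.1 ≠ p.2),
      2 * Sa * (B p.1 p.2) ^ 2 := by
    rw [← hNoff, ← Finset.mul_sum, ← hSo, hNeq]
  have hterm := (Finset.sum_eq_sum_iff_of_le hle).mp hsum
  have hex : ∃ i j : Fin m, i ≠ j ∧ B i j ≠ 0 := by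
    by_contra hcon
    push_neg at hcon
    have : So = 0 := by
      rw [hSo]
      apply Finset.sum_eq_zero
      intro p hp
      simp only [Finset.mem_filter] at hp
      rw [hcon p.1 p.2 hp.2]
      simp
    rw [this] at hSoSa
    exact hSaz hSoSa.symm
  obtain ⟨i, j, hij, hBij⟩ := hex
  have heq2 : (a i - a j) ^ 2 = 2 * Sa := by
    have h := hterm (i, j) (by simp [hij])
    have h2 : ((a i - a j) ^ 2 - 2 * Sa) * (B i j) ^ 2 = 0 := by linear_combination h
    rcases mul_eq_zero.mp h2 with h | h
    · linarith
    · exact absurd (pow_eq_zero_iff two_ne_zero |>.mp h) hBij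
  have hR : Sa = (a i)^2 + (a j)^2 + ∑ k ∈ Finset.univ \ {i, j}, (a k)^2 := by
    rw [hSa, ← Finset.sum_sdiff (Finset.subset_univ ({i, j} : Finset (Fin m))),
      Finset.sum_pair hij]
    ring
  set R := ∑ k ∈ Finset.univ \ {i, j}, (a k)^2 with hRdef
  have hR0 : 0 ≤ R := Finset.sum_nonneg fun k _ => sq_nonneg _
  have hsum0 : (a i + a j) ^ 2 + 2 * R = 0 := by linarith [heq2, hR, sq_nonneg (a i - a j)]
  have haij : a i + a j = 0 := by
    have h0 : (a i + a j) ^ 2 = 0 := le_antisymm (by linarith) (sq_nonneg _)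
    exact pow_eq_zero_iff two_ne_zero |>.mp h0
  have hRz : R = 0 := by nlinarith [sq_nonneg (a i + a j)]
  have hrest : ∀ k ∈ Finset.univ \ ({i, j} : Finset (Fin m)), a k = 0 := by
    intro k hk
    have := (Finset.sum_eq_zero_iff_of_nonneg (fun k _ => sq_nonneg (a k))).mp hRz k hk
    exact pow_eq_zero_iff two_ne_zero |>.mp this
  have hdecomp : (∑ k, a k) = ∑ k ∈ Finset.univ \ ({i,j} : Finset (Fin m)), a k
      + ∑ k ∈ ({i,j} : Finset (Fin m)), a k :=
    (Finset.sum_sdiff (Finset.subset_univ _)).symm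
  rw [hdecomp, Finset.sum_eq_zero hrest, Finset.sum_pair hij, haij, zero_add]

open Finset in
lemma trace_transpose_mul_self_eq (m : ℕ) (X : Matrix (Fin m) (Fin m) ℝ) :
    (Xᵀ * X).trace = ∑ p : Fin m × Fin m, (X p.1 p.2) ^ 2 := by
  rw [Matrix.trace, Fintype.sum_prod_type]
  simp only [Matrix.diag_apply, Matrix.mul_apply, Matrix.transpose_apply]
  rw [Finset.sum_comm]
  exact Finset.sum_congr rfl fun i _ => Finset.sum_congr rfl fun j _ => (sq (X i j)).symm


/-- Equality case of the Li–Li inequality for `p = 2` symmetric matrices, with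
`N A = trace (Aᵀ A)`: if equality holds nontrivially, then `N(A₁) = N(A₂)`,
`trace (A₁ A₂) = 0`, and `trace A₁ = trace A₂ = 0`. -/
theorem li_li_equality_case (m : ℕ) (A₁ A₂ : Matrix (Fin m) (Fin m) ℝ)
    (h₁ : A₁.IsSymm) (h₂ : A₂.IsSymm)
    (heq : ((A₁ * A₂ - A₂ * A₁)ᵀ * (A₁ * A₂ - A₂ * A₁)).trace
        + ((A₂ * A₁ - A₁ * A₂)ᵀ * (A₂ * A₁ - A₁ * A₂)).trace
        + ((A₁ * A₂).trace) ^ 2 + ((A₂ * A₁).trace) ^ 2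
        + ((A₁ * A₁).trace) ^ 2 + ((A₂ * A₂).trace) ^ 2
      = (3 / 2 : ℝ) * ((A₁ᵀ * A₁).trace + (A₂ᵀ * A₂).trace) ^ 2)
    (hne : ¬(A₁ = 0 ∧ A₂ = 0)) :
    (A₁ᵀ * A₁).trace = (A₂ᵀ * A₂).trace ∧ (A₁ * A₂).trace = 0 ∧
      A₁.trace = 0 ∧ A₂.trace = 0 := by
  classical
  have hH : A₁.IsHermitian := by
    rw [Matrix.IsHermitian, Matrix.conjTranspose_eq_transpose_of_trivial]; exact h₁
  set a : Fin m → ℝ := hH.eigenvalues with ha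
  set U : Matrix (Fin m) (Fin m) ℝ := (hH.eigenvectorUnitary : Matrix (Fin m) (Fin m) ℝ)
    with hUdef
  set W : Matrix (Fin m) (Fin m) ℝ := star U with hWdef
  have hWU : W * U = 1 := Matrix.UnitaryGroup.star_mul_self hH.eigenvectorUnitary
  have hUW : U * W = 1 := hH.eigenvectorUnitary.2.2
  have hWt : W = Uᵀ := by
    rw [hWdef, Matrix.star_eq_conjTranspose, Matrix.conjTranspose_eq_transpose_of_trivial]
  have hA1 : A₁ = U * Matrix.diagonal a * W := by
    have := hH.spectral_theorem
    simpa [ha, hUdef, hWdef] using this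
  set B : Matrix (Fin m) (Fin m) ℝ := W * A₂ * U with hBdef
  have hA2 : A₂ = U * B * W := by
    rw [hBdef]
    rw [show U * (W * A₂ * U) * W = (U * W) * A₂ * (U * W) by noncomm_ring]
    rw [hUW]; simp
  have hD : W * A₁ * U = Matrix.diagonal a := by
    rw [hA1, show W * (U * Matrix.diagonal a * W) * U
      = (W * U) * Matrix.diagonal a * (W * U) by noncomm_ring, hWU]
    simp
  -- conj helpers
  have tc : ∀ X : Matrix (Fin m) (Fin m) ℝ, (W * X * U).trace = X.trace := by
    intro X
    rw [Matrix.trace_mul_cycle, hUW, Matrix.one_mul]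
  have mc : ∀ X Y : Matrix (Fin m) (Fin m) ℝ,
      (W * X * U) * (W * Y * U) = W * (X * Y) * U := by
    intro X Y
    rw [show (W * X * U) * (W * Y * U) = W * X * (U * W) * Y * U by noncomm_ring, hUW]
    noncomm_ring
  have tconj : ∀ X : Matrix (Fin m) (Fin m) ℝ,
      ((W * X * U)ᵀ * (W * X * U)).trace = (Xᵀ * X).trace := by
    intro X
    have hT : (W * X * U)ᵀ = W * Xᵀ * U := by
      rw [Matrix.transpose_mul, Matrix.transpose_mul, hWt]
      rw [Matrix.transpose_transpose]
      noncomm_ring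
    rw [hT, mc, tc]
  -- commutator
  have hMconj : W * (A₁ * A₂ - A₂ * A₁) * U
      = Matrix.diagonal a * B - B * Matrix.diagonal a := by
    rw [Matrix.mul_sub, Matrix.sub_mul, ← mc, ← mc, hD]
  have hcommval : ((A₁ * A₂ - A₂ * A₁)ᵀ * (A₁ * A₂ - A₂ * A₁)).trace
      = ∑ p : Fin m × Fin m, ((a p.1 - a p.2) * B p.1 p.2) ^ 2 := by
    rw [← tconj, hMconj, trace_transpose_mul_self_eq]
    refine Finset.sum_congr rfl fun p _ => ?_
    congr 1
    simp [Matrix.sub_apply, Matrix.diagonal_mul, Matrix.mul_diagonal]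
    ring
  have hcommval' : ((A₂ * A₁ - A₁ * A₂)ᵀ * (A₂ * A₁ - A₁ * A₂)).trace
      = ∑ p : Fin m × Fin m, ((a p.1 - a p.2) * B p.1 p.2) ^ 2 := by
    rw [show A₂ * A₁ - A₁ * A₂ = -(A₁ * A₂ - A₂ * A₁) from (neg_sub _ _).symm, Matrix.transpose_neg,
      Matrix.neg_mul, Matrix.mul_neg, neg_neg, hcommval]
  have htval : (A₁ * A₂).trace = ∑ i, a i * B i i := by
    rw [← tc (A₁ * A₂), ← mc, hD]
    rw [Matrix.trace]
    refine Finset.sum_congr rfl fun i _ => ?_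
    simp [Matrix.diagonal_mul]
    exact Or.inl rfl
  have htval' : (A₂ * A₁).trace = ∑ i, a i * B i i := by
    rw [Matrix.trace_mul_comm, htval]
  have hn1val : (A₁ * A₁).trace = ∑ i, (a i) ^ 2 := by
    rw [← tc (A₁ * A₁), ← mc, hD, Matrix.diagonal_mul_diagonal, Matrix.trace_diagonal]
    exact Finset.sum_congr rfl fun i _ => (sq (a i)).symm
  have hn1val' : (A₁ᵀ * A₁).trace = ∑ i, (a i) ^ 2 := by rw [h₁, hn1val]
  have hn2val : (A₂ᵀ * A₂).trace = ∑ p : Fin m × Fin m, (B p.1 p.2) ^ 2 := by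
    rw [← tconj, trace_transpose_mul_self_eq]
  have hn2val' : (A₂ * A₂).trace = ∑ p : Fin m × Fin m, (B p.1 p.2) ^ 2 := by
    have h' : A₂ᵀ * A₂ = A₂ * A₂ := by rw [h₂]
    rw [← h', hn2val]
  have htr1 : A₁.trace = ∑ i, a i := by
    rw [← tc A₁, hD, Matrix.trace_diagonal]
  have htr2 : A₂.trace = ∑ i, B i i := by
    rw [← tc A₂]; rfl
  rw [hcommval, hcommval', htval, htval', hn1val, hn2val', hn1val', hn2val] at heq
  have hne' : ¬(a = 0 ∧ B = 0) := by
    rintro ⟨haz, hBz⟩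
    apply hne
    constructor
    · rw [hA1, haz, show Matrix.diagonal (0 : Fin m → ℝ) = 0 from Matrix.diagonal_zero, Matrix.mul_zero, Matrix.zero_mul]
    · rw [hA2, hBz, Matrix.mul_zero, Matrix.zero_mul]
  obtain ⟨e1, e2, e3, e4⟩ := li_li_key m a B (by linarith) hne'
  exact ⟨by rw [hn1val', hn2val, e1], by rw [htval, e2], by rw [htr1, e3], by rw [htr2, e4]⟩
end

section
/- Let $K \in \mathbb{R}$ and let $\lambda_1, \ldots, \lambda_m$, $\mu_1, \ldots, \mu_m$ be real numbers with $\sum_i \mu_i = 0$ and $\lambda_i \lambda_j \geq K$ for all $i \neq j$. Then $(\sum_i \lambda_i)(\sum_j \lambda_j \mu_j^2) - (\sum_i \lambda_i \mu_i)^2 \geq m K \sum_i \mu_i^2$. -/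
/-- If `∑ μᵢ = 0` and `λᵢ λⱼ ≥ K` for all `i ≠ j`, then
`(∑ λᵢ)(∑ λⱼ μⱼ²) - (∑ λᵢ μᵢ)² ≥ m K ∑ μᵢ²`. -/
theorem trace_term_lower_bound (m : ℕ) (K : ℝ) (lam mu : Fin m → ℝ)
    (hmu : ∑ i, mu i = 0)
    (hK : ∀ i j : Fin m, i ≠ j → lam i * lam j ≥ K) :
    (∑ i, lam i) * (∑ j, lam j * (mu j) ^ 2) - (∑ i, lam i * mu i) ^ 2
      ≥ (m : ℝ) * K * ∑ i, (mu i) ^ 2 := by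
  have h1 : (∑ i, lam i) * (∑ j, lam j * (mu j) ^ 2) - (∑ i, lam i * mu i) ^ 2
      = (1/2) * ∑ i, ∑ j, lam i * lam j * (mu i - mu j)^2 := by
    have : ∀ i j : Fin m, lam i * lam j * (mu i - mu j)^2
        = lam i * (lam j * mu j ^ 2) + (lam i * mu i ^ 2) * lam j
          - 2 * ((lam i * mu i) * (lam j * mu j)) := by
      intro i j; ring
    simp only [this, Finset.sum_add_distrib, Finset.sum_sub_distrib,
      ← Finset.mul_sum, ← Finset.sum_mul]
    rw [Finset.mul_sum, Finset.sum_mul, ← Finset.sum_mul]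
    ring_nf
    simp only [mul_assoc, ← Finset.mul_sum]
    ring
  have h2 : (m : ℝ) * K * ∑ i, (mu i) ^ 2
      = (1/2) * ∑ i : Fin m, ∑ j : Fin m, K * (mu i - mu j)^2 := by
    have : ∀ i j : Fin m, K * (mu i - mu j)^2
        = K * (mu i ^ 2) + K * (mu j ^ 2) - 2 * K * (mu i * mu j) := by
      intro i j; ring
    simp only [this, Finset.sum_add_distrib, Finset.sum_sub_distrib,
      ← Finset.mul_sum, ← Finset.sum_mul, Finset.sum_const, Finset.card_univ,
      Fintype.card_fin, nsmul_eq_mul]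
    rw [hmu]; ring
  rw [h1, h2]
  rw [ge_iff_le]
  apply mul_le_mul_of_nonneg_left _ (by norm_num : (0:ℝ) ≤ 1/2)
  apply Finset.sum_le_sum; intro i _
  apply Finset.sum_le_sum; intro j _
  rcases eq_or_ne i j with rfl | h
  · simp
  · exact mul_le_mul_of_nonneg_right (hK i j h) (sq_nonneg _)
end

section
/- Let $m \geq 3$ and let $\lambda_1, \ldots, \lambda_m$ be real numbers with $(\sum_i \lambda_i)^2 \geq (m-1)\sum_i \lambda_i^2 + (m-1) b$ for some $b \geq S$ where $S \geq 0$. Then for any traceless collection: if $\mu^{(\alpha)}_1,\dots,\mu^{(\alpha)}_m$, $\alpha=1,\dots,k$, satisfy $\sum_i \mu^{(\alpha)}_i = 0$ and $\sum_\alpha \sum_i (\mu_i^{(\alpha)})^2 = S$, then $\sum_\alpha \big[(\sum_i \lambda_i)(\sum_j \lambda_j (\mu_j^{(\alpha)})^2) - (\sum_i \lambda_i \mu_i^{(\alpha)})^2\big] \geq \frac{m b}{2} S \geq \frac{m}{2} S^2$. -/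
/-- Combined algebraic estimate underlying (4.13)/(4.19): Chen's lemma gives
`λᵢ λⱼ ≥ b/2` for `i ≠ j`, and the trace identity then bounds each summand. -/
theorem combined_trace_estimate (m k : ℕ) (hm : 3 ≤ m) (lam : Fin m → ℝ) (b S : ℝ)
    (hS : 0 ≤ S) (hb : b ≥ S)
    (hchen : (∑ i, lam i) ^ 2 ≥ (m - 1 : ℝ) * (∑ i, (lam i) ^ 2) + (m - 1 : ℝ) * b)
    (mu : Fin k → Fin m → ℝ)
    (htraceless : ∀ α, ∑ i, mu α i = 0)
    (hnorm : ∑ α, ∑ i, (mu α i) ^ 2 = S) :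
    (∑ α, ((∑ i, lam i) * (∑ j, lam j * (mu α j) ^ 2)
        - (∑ i, lam i * mu α i) ^ 2)
      ≥ (m : ℝ) * b / 2 * S) ∧
    (m : ℝ) * b / 2 * S ≥ (m : ℝ) / 2 * S ^ 2 := by
  have hm1 : (3:ℝ) ≤ (m:ℝ) := by exact_mod_cast hm
  -- Chen's lemma
  have hchen2 : ∀ i j : Fin m, i ≠ j → b ≤ 2 * (lam i * lam j) := by
    intro i j hij
    set s := (Finset.univ.erase i) with hs
    have hjs : j ∈ s := Finset.mem_erase.mpr ⟨hij.symm, Finset.mem_univ j⟩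
    set f : Fin m → ℝ := fun x => lam x + (if x = j then lam i else 0) with hf
    have hsum : ∑ x ∈ s, f x = ∑ x, lam x := by
      rw [hf]
      rw [Finset.sum_add_distrib, Finset.sum_ite_eq' s j (fun _ => lam i), if_pos hjs]
      rw [hs, Finset.sum_erase_eq_sub (Finset.mem_univ i)]
      ring
    have hsq : ∑ x ∈ s, f x ^ 2 = (∑ x, lam x ^ 2) + 2 * (lam i * lam j) := by
      have : ∀ x ∈ s, f x ^ 2 = lam x ^ 2 + (if x = j then 2 * lam i * lam j + lam i ^ 2 else 0) := by
        intro x hx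
        rw [hf]
        by_cases h : x = j <;> simp [h] <;> ring
      rw [Finset.sum_congr rfl this, Finset.sum_add_distrib,
        Finset.sum_ite_eq' s j _, if_pos hjs,
        hs, Finset.sum_erase_eq_sub (Finset.mem_univ i)]
      ring
    have hcard : (s.card : ℝ) = (m : ℝ) - 1 := by
      rw [hs, Finset.card_erase_of_mem (Finset.mem_univ i)]
      have h1 : 1 ≤ Finset.univ.card (α := Fin m) := by simp; omega
      push_cast [Nat.cast_sub h1]
      simp
    have key := sq_sum_le_card_mul_sum_sq (s := s) (f := f)
    rw [hsum, hsq, hcard] at key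
    nlinarith [key, hchen]
  -- identity per α
  have hid : ∀ α, (∑ i, lam i) * (∑ j, lam j * (mu α j) ^ 2) - (∑ i, lam i * mu α i) ^ 2
      = (1/2) * ∑ i, ∑ j, lam i * lam j * (mu α i - mu α j) ^ 2 := by
    intro α
    have e1 : (∑ i, lam i) * (∑ j, lam j * mu α j ^ 2)
        = ∑ i, ∑ j, lam i * (lam j * mu α j ^ 2) := Finset.sum_mul_sum _ _ _ _
    have e2 : (∑ i, lam i * mu α i ^ 2) * (∑ j, lam j)
        = ∑ i, ∑ j, (lam i * mu α i ^ 2) * lam j := Finset.sum_mul_sum _ _ _ _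
    have e3 : (∑ i, lam i * mu α i) * (∑ j, lam j * mu α j)
        = ∑ i, ∑ j, (lam i * mu α i) * (lam j * mu α j) := Finset.sum_mul_sum _ _ _ _
    have e4 : ∑ i, ∑ j, lam i * lam j * (mu α i - mu α j) ^ 2
        = (∑ i, ∑ j, (lam i * mu α i ^ 2) * lam j)
          + (∑ i, ∑ j, lam i * (lam j * mu α j ^ 2))
          - 2 * ∑ i, ∑ j, (lam i * mu α i) * (lam j * mu α j) := by
      rw [Finset.mul_sum, ← Finset.sum_add_distrib, ← Finset.sum_sub_distrib]
      refine Finset.sum_congr rfl fun i _ => ?_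
      rw [Finset.mul_sum, ← Finset.sum_add_distrib, ← Finset.sum_sub_distrib]
      exact Finset.sum_congr rfl fun j _ => by ring
    rw [e4, ← e1, ← e2, ← e3]
    ring
  -- bound per α
  have hbound : ∀ α, (1/2) * ∑ i, ∑ j, lam i * lam j * (mu α i - mu α j) ^ 2
      ≥ (m : ℝ) * b / 2 * ∑ i, (mu α i) ^ 2 := by
    intro α
    have step : ∑ i, ∑ j, (b/2) * (mu α i - mu α j) ^ 2
        ≤ ∑ i, ∑ j, lam i * lam j * (mu α i - mu α j) ^ 2 := by
      apply Finset.sum_le_sum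
      intro i _
      apply Finset.sum_le_sum
      intro j _
      by_cases h : i = j
      · simp [h]
      · have := hchen2 i j h
        nlinarith [sq_nonneg (mu α i - mu α j)]
    have expand : ∑ i, ∑ j, (mu α i - mu α j) ^ 2
        = 2 * (m : ℝ) * ∑ i, (mu α i) ^ 2 := by
      have inner : ∀ i : Fin m, ∑ j, (mu α i - mu α j) ^ 2
          = (m : ℝ) * mu α i ^ 2 + (∑ j, mu α j ^ 2) := by
        intro i
        have h2 : ∀ j : Fin m, (mu α i - mu α j) ^ 2
            = mu α i ^ 2 + (mu α j ^ 2 - 2 * mu α i * mu α j) := by intros; ring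
        simp_rw [h2]
        rw [Finset.sum_add_distrib, Finset.sum_const, Finset.sum_sub_distrib,
          ← Finset.mul_sum]
        rw [htraceless α, mul_zero, sub_zero, Finset.card_univ, Fintype.card_fin,
          nsmul_eq_mul]
      simp_rw [inner]
      rw [Finset.sum_add_distrib, ← Finset.mul_sum, Finset.sum_const,
        Finset.card_univ, Fintype.card_fin]
      simp
      ring
    have : ∑ i, ∑ j, (b/2) * (mu α i - mu α j) ^ 2
        = (m : ℝ) * b * ∑ i, (mu α i) ^ 2 := by
      simp_rw [← Finset.mul_sum]
      rw [expand]; ring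
    rw [this] at step
    linarith
  constructor
  · calc ∑ α, ((∑ i, lam i) * (∑ j, lam j * (mu α j) ^ 2) - (∑ i, lam i * mu α i) ^ 2)
        = ∑ α, (1/2) * ∑ i, ∑ j, lam i * lam j * (mu α i - mu α j) ^ 2 := by
          exact Finset.sum_congr rfl (fun α _ => hid α)
      _ ≥ ∑ α, (m : ℝ) * b / 2 * ∑ i, (mu α i) ^ 2 :=
          Finset.sum_le_sum (fun α _ => hbound α)
      _ = (m : ℝ) * b / 2 * S := by rw [← Finset.mul_sum, hnorm]
  · nlinarith [mul_nonneg hS (sub_nonneg.mpr hb)]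
end
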